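/- Let m, n be coprime positive integers with m > n and both m and n odd, and set k = √((m² − n²)/(m² + 2mn)). Then √(m² + 2mn)·E(k) − (mn/√(m² + 2mn))·K(k) ≤ 2(m + n) − 3. (Equivalently, Λ_{2(m+n)−3}(M_{m,n}) = 8π·(√(m²+2mn)·E(k) − (mn/√(m²+2mn))·K(k)) ≤ 8π·(2(m+n) − 3), which shows the metric on M_{m,n} is not maximal for Λ_{2(m+n)−3}.) -/

import Mathlib

open Real

/-- The complete elliptic integral of the first kind,
`K(k) = ∫₀¹ dx/(√(1−x²)·√(1−k²x²))`. -/
noncomputable def ellK (k : ℝ) : ℝ :=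
  ∫ x in (0 : ℝ)..1, 1 / (Real.sqrt (1 - x ^ 2) * Real.sqrt (1 - k ^ 2 * x ^ 2))

/-- The complete elliptic integral of the second kind,
`E(k) = ∫₀¹ √(1−k²x²)/√(1−x²) dx`. -/
noncomputable def ellE (k : ℝ) : ℝ :=
  ∫ x in (0 : ℝ)..1, Real.sqrt (1 - k ^ 2 * x ^ 2) / Real.sqrt (1 - x ^ 2)

open MeasureTheory intervalIntegral


lemma g_intable :
    IntervalIntegrable (fun x : ℝ => 1 / Real.sqrt (1 - x ^ 2)) volume 0 1 := by
  have hbig : IntervalIntegrable (fun x : ℝ => ((1 : ℝ) - x) ^ (-(1/2 : ℝ))) volume 0 1 := by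
    have := (intervalIntegrable_rpow' (a := (0:ℝ)) (b := 1) (r := -(1/2)) (by norm_num)).comp_sub_left 1
    simpa using this.symm
  apply hbig.mono_fun
  · exact (measurable_const.div
      ((Real.continuous_sqrt.comp (continuous_const.sub (continuous_pow 2))).measurable)).aestronglyMeasurable
  · have h01 : Set.uIoc (0:ℝ) 1 = Set.Ioc 0 1 := Set.uIoc_of_le (by norm_num)
    rw [h01]
    filter_upwards [ae_restrict_mem measurableSet_Ioc] with x hx
    obtain ⟨hx0, hx1⟩ := hx
    have h1x : (0:ℝ) ≤ 1 - x := by linarith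
    have hxx : x^2 ≤ x := by nlinarith
    have h12 : (1:ℝ) - x ≤ 1 - x^2 := by linarith
    have hs : Real.sqrt (1-x) ≤ Real.sqrt (1-x^2) := Real.sqrt_le_sqrt h12
    have hrw : ((1:ℝ) - x) ^ (-(1/2:ℝ)) = 1 / Real.sqrt (1-x) := by
      rw [Real.rpow_neg h1x, Real.sqrt_eq_rpow]
      norm_num
    rw [hrw]
    simp only [norm_div, norm_one, Real.norm_eq_abs,
      abs_of_nonneg (Real.sqrt_nonneg _)]
    rcases eq_or_lt_of_le h1x with h | h
    · have hx1' : x = 1 := by linarith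
      simp [hx1']
    · have : 0 < Real.sqrt (1-x) := Real.sqrt_pos.2 h
      exact one_div_le_one_div_of_le this hs

lemma integral_g : ∫ x in (0:ℝ)..1, 1 / Real.sqrt (1 - x ^ 2) = π / 2 := by
  rw [integral_eq_sub_of_hasDerivAt_of_le (by norm_num)
    Real.continuous_arcsin.continuousOn
    (fun x hx => Real.hasDerivAt_arcsin (by rintro rfl; exact absurd hx.1 (by norm_num))
      (by rintro rfl; exact absurd hx.2 (by norm_num)))
    g_intable]
  simp [Real.arcsin_one, Real.arcsin_zero]

lemma ellE_pt_le (k x : ℝ) :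
    Real.sqrt (1 - k ^ 2 * x ^ 2) / Real.sqrt (1 - x ^ 2) ≤ 1 / Real.sqrt (1 - x ^ 2) := by
  have h1 : Real.sqrt (1 - k ^ 2 * x ^ 2) ≤ 1 :=
    Real.sqrt_le_one.2 (by nlinarith [sq_nonneg (k*x)])
  rcases eq_or_lt_of_le (Real.sqrt_nonneg (1 - x ^ 2)) with h | h
  · rw [← h]; simp
  · exact (div_le_div_iff_of_pos_right h).2 h1

lemma ellE_intable (k : ℝ) :
    IntervalIntegrable (fun x : ℝ => Real.sqrt (1 - k ^ 2 * x ^ 2) / Real.sqrt (1 - x ^ 2))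
      volume 0 1 := by
  apply g_intable.mono_fun
  · exact ((Real.continuous_sqrt.comp (by continuity)).measurable.div
      ((Real.continuous_sqrt.comp (continuous_const.sub (continuous_pow 2))).measurable)).aestronglyMeasurable
  · filter_upwards with x
    simp only [Real.norm_eq_abs, abs_of_nonneg (div_nonneg (Real.sqrt_nonneg _) (Real.sqrt_nonneg _)),
      abs_of_nonneg (div_nonneg zero_le_one (Real.sqrt_nonneg _))]
    exact ellE_pt_le k x

lemma ellE_nonneg (k : ℝ) : 0 ≤ ellE k :=
  intervalIntegral.integral_nonneg (by norm_num)
    (fun x _ => div_nonneg (Real.sqrt_nonneg _) (Real.sqrt_nonneg _))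

lemma ellE_le_pi_div_two (k : ℝ) : ellE k ≤ π / 2 := by
  rw [ellE, ← integral_g]
  exact intervalIntegral.integral_mono_on (by norm_num) (ellE_intable k) g_intable
    (fun x _ => ellE_pt_le k x)

lemma ellK_intable {k : ℝ} (hk : k ^ 2 < 1) :
    IntervalIntegrable (fun x : ℝ => 1 / (Real.sqrt (1 - x ^ 2) * Real.sqrt (1 - k ^ 2 * x ^ 2)))
      volume 0 1 := by
  have hc : 0 < Real.sqrt (1 - k ^ 2) := Real.sqrt_pos.2 (by linarith)
  apply (g_intable.const_mul (1 / Real.sqrt (1 - k ^ 2))).mono_fun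
  · exact (measurable_const.div
      (((Real.continuous_sqrt.comp (continuous_const.sub (continuous_pow 2))).measurable.mul
        (Real.continuous_sqrt.comp (by continuity)).measurable))).aestronglyMeasurable
  · have h01 : Set.uIoc (0:ℝ) 1 = Set.Ioc 0 1 := Set.uIoc_of_le (by norm_num)
    rw [h01]
    filter_upwards [ae_restrict_mem measurableSet_Ioc] with x hx
    obtain ⟨hx0, hx1⟩ := hx
    have hx2 : x ^ 2 ≤ 1 := by nlinarith
    have hu : 1 - k ^ 2 ≤ 1 - k ^ 2 * x ^ 2 := by nlinarith [sq_nonneg k]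
    have hsu : Real.sqrt (1 - k ^ 2) ≤ Real.sqrt (1 - k ^ 2 * x ^ 2) := Real.sqrt_le_sqrt hu
    have hsu0 : 0 < Real.sqrt (1 - k ^ 2 * x ^ 2) := lt_of_lt_of_le hc hsu
    simp only [Real.norm_eq_abs]
    rw [abs_of_nonneg (by positivity), abs_of_nonneg (by positivity)]
    rw [one_div, one_div, one_div, mul_inv_rev]
    exact mul_le_mul_of_nonneg_right (inv_anti₀ hc hsu)
      (inv_nonneg.2 (Real.sqrt_nonneg _)) |>.trans
      (le_of_eq (by rw [mul_comm]))

lemma ellE_le_ellK {k : ℝ} (hk : k ^ 2 < 1) : ellE k ≤ ellK k := by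
  rw [ellE, ellK]
  apply intervalIntegral.integral_mono_on (by norm_num) (ellE_intable k) (ellK_intable hk)
  intro x hx
  obtain ⟨hx0, hx1⟩ := hx
  rcases eq_or_lt_of_le hx1 with h | h
  · subst h
    simp
  · have hv : 0 < Real.sqrt (1 - x ^ 2) := Real.sqrt_pos.2 (by nlinarith)
    have hu1 : 1 - k ^ 2 * x ^ 2 ≤ 1 := by nlinarith [sq_nonneg (k*x)]
    have hu0 : 0 < 1 - k ^ 2 * x ^ 2 := by nlinarith [sq_nonneg k, sq_nonneg x]
    have hsu : 0 < Real.sqrt (1 - k ^ 2 * x ^ 2) := Real.sqrt_pos.2 hu0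
    rw [div_le_div_iff₀ hv (by positivity)]
    have hsq : Real.sqrt (1 - k ^ 2 * x ^ 2) * Real.sqrt (1 - k ^ 2 * x ^ 2)
        = 1 - k ^ 2 * x ^ 2 := Real.mul_self_sqrt (le_of_lt hu0)
    nlinarith [Real.sqrt_nonneg (1 - x ^ 2)]

set_option maxHeartbeats 1000000 in
/-- Non-maximality for `mn` odd: if `m > n` are coprime positive integers, both odd,
and `k = √((m² − n²)/(m² + 2mn))`, then
`√(m² + 2mn)·E(k) − (mn/√(m² + 2mn))·K(k) ≤ 2(m + n) − 3`; equivalently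
`Λ_{2(m+n)−3}(M_{m,n}) ≤ 8π·(2(m+n) − 3)`. -/
theorem non_maximality_odd (m n : ℕ) (hn : 0 < n) (hmn : n < m)
    (hcop : Nat.Coprime m n) (hm_odd : Odd m) (hn_odd : Odd n) :
    Real.sqrt ((m : ℝ) ^ 2 + 2 * m * n) *
        ellE (Real.sqrt (((m : ℝ) ^ 2 - n ^ 2) / ((m : ℝ) ^ 2 + 2 * m * n))) -
      (m : ℝ) * n / Real.sqrt ((m : ℝ) ^ 2 + 2 * m * n) *
        ellK (Real.sqrt (((m : ℝ) ^ 2 - n ^ 2) / ((m : ℝ) ^ 2 + 2 * m * n))) ≤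
    2 * ((m : ℝ) + n) - 3 := by
  have tri : (m = 3 ∧ n = 1) ∨ (m = 5 ∧ n = 1) ∨ 8 ≤ m + n := by
    obtain ⟨p, hp⟩ := hm_odd
    obtain ⟨q, hq⟩ := hn_odd
    omega
  have hT1 : (1:ℝ) ≤ (n:ℝ) := by exact_mod_cast hn
  have hST : (n:ℝ) < (m:ℝ) := by exact_mod_cast hmn
  have hS0 : (0:ℝ) < (m:ℝ) := by linarith
  have hd : (0:ℝ) < (m:ℝ) ^ 2 + 2 * m * n := by nlinarith
  have hnum : (0:ℝ) ≤ (m:ℝ) ^ 2 - (n:ℝ) ^ 2 := by nlinarith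
  set k : ℝ := Real.sqrt (((m:ℝ) ^ 2 - n ^ 2) / ((m:ℝ) ^ 2 + 2 * m * n)) with hk
  have hk2 : k ^ 2 = ((m:ℝ) ^ 2 - n ^ 2) / ((m:ℝ) ^ 2 + 2 * m * n) :=
    Real.sq_sqrt (div_nonneg hnum (le_of_lt hd))
  have hk2lt : k ^ 2 < 1 := by
    rw [hk2, div_lt_one hd]; nlinarith
  set a : ℝ := Real.sqrt ((m:ℝ) ^ 2 + 2 * m * n) with ha
  have ha0 : 0 < a := Real.sqrt_pos.2 hd
  have ha2 : a ^ 2 = (m:ℝ) ^ 2 + 2 * m * n := Real.sq_sqrt (le_of_lt hd)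
  have hE := ellE_le_pi_div_two k
  have hEK := ellE_le_ellK hk2lt
  have hE0 := ellE_nonneg k
  have hpi : π < 3.15 := Real.pi_lt_d2
  have hpi0 : 0 < π := Real.pi_pos
  -- key numeric inequality
  have hkey : π * ((m:ℝ) * ((m:ℝ) + n)) ≤ (4 * ((m:ℝ) + n) - 6) * a := by
    rcases tri with ⟨rfl, rfl⟩ | ⟨rfl, rfl⟩ | h8
    · have h15 : (3.87:ℝ) ≤ Real.sqrt 15 := by
        rw [Real.le_sqrt (by norm_num) (by norm_num)]; norm_num
      have ha15 : a = Real.sqrt 15 := by rw [ha]; norm_num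
      rw [ha15]; push_cast; nlinarith [h15, hpi]
    · have h35 : (5.9:ℝ) ≤ Real.sqrt 35 := by
        rw [Real.le_sqrt (by norm_num) (by norm_num)]; norm_num
      have ha35 : a = Real.sqrt 35 := by rw [ha]; norm_num
      rw [ha35]; push_cast; nlinarith [h35, hpi]
    · have hST8 : (8:ℝ) ≤ (m:ℝ) + n := by exact_mod_cast h8
      have haS : (m:ℝ) ≤ a := by
        by_contra h
        push_neg at h
        nlinarith
      nlinarith [mul_le_mul_of_nonneg_left haS
        (by linarith : (0:ℝ) ≤ 4 * ((m:ℝ) + n) - 6)]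
  -- assemble
  have step1 : (m:ℝ) * n / a * ellK k ≥ (m:ℝ) * n / a * ellE k :=
    mul_le_mul_of_nonneg_left hEK (by positivity)
  have hcoef : 0 ≤ a - (m:ℝ) * n / a := by
    rw [sub_nonneg, div_le_iff₀ ha0]
    nlinarith
  have step3 : (a - (m:ℝ) * n / a) * ellE k ≤ (a - (m:ℝ) * n / a) * (π / 2) :=
    mul_le_mul_of_nonneg_left hE hcoef
  have step4 : (a - (m:ℝ) * n / a) * (π / 2) ≤ 2 * ((m:ℝ) + n) - 3 := by
    rw [show a - (m:ℝ) * n / a = (a ^ 2 - (m:ℝ) * n) / a by field_simp, ha2]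
    rw [div_mul_eq_mul_div, div_le_iff₀ ha0]
    nlinarith
  have expand : a * ellE k - (m:ℝ) * n / a * ellE k = (a - (m:ℝ) * n / a) * ellE k := by ring
  linarith [step1, step3, step4]
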